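/- Routing permutations through the Kaleidoscope architecture BB* (Beneš-type routing): for every n ≥ 1 and every permutation σ of Fin(2^n), there exist permutations τ_1, …, τ_{2n} of Fin(2^n) such that σ = τ_{2n} ∘ τ_{2n−1} ∘ ⋯ ∘ τ_1, and for each j every x satisfies τ_j(x) ∈ { x, x XOR 2^{b_j} } (XOR on the underlying natural-number indices), where the bit sequence is (b_1, …, b_{2n}) = (n−1, n−2, …, 1, 0, 0, 1, …, n−2, n−1). -/

import Mathlib

set_option linter.unusedVariables false

lemma xor_pow_of_lt {n x : ℕ} (h : x < 2^n) : x ^^^ 2^n = x + 2^n := by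
  apply Nat.eq_of_testBit_eq
  intro k
  rw [Nat.testBit_xor, Nat.testBit_two_pow]
  rcases lt_trichotomy k n with hk | rfl | hk
  · have hne : decide (n = k) = false := by simp; omega
    simp only [hne, Bool.xor_false]
    rw [Nat.testBit_eq_decide_div_mod_eq, Nat.testBit_eq_decide_div_mod_eq]
    have h1 : 2^n = 2^(n-k) * 2^k := by rw [← pow_add]; congr 1; omega
    have h2 : (x + 2^n) / 2^k = x / 2^k + 2^(n-k) := by
      rw [h1, Nat.add_mul_div_right _ _ (Nat.pow_pos (n := k) (by norm_num))]
    rw [h2]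
    have h3 : 2^(n-k) = 2 * 2^(n-k-1) := by
      rw [← pow_succ']; congr 1; omega
    rw [h3, Nat.add_mul_mod_self_left]
  · have hde : decide (k = k) = true := by simp
    simp only [hde, Bool.xor_true]
    have hx : x.testBit k = false := Nat.testBit_lt_two_pow h
    rw [hx]
    rw [Nat.testBit_eq_decide_div_mod_eq]
    have : (x + 2^k) / 2^k = x / 2^k + 1 := by
      rw [Nat.add_div_right _ (Nat.pow_pos (n := k) (by norm_num))]
    rw [this, Nat.div_eq_of_lt h]
    simp
  · have hne : decide (n = k) = false := by simp; omega
    simp only [hne, Bool.xor_false]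
    have h1 : x.testBit k = false := Nat.testBit_lt_two_pow (lt_trans h (Nat.pow_lt_pow_right (by norm_num) hk))
    have h2 : (x + 2^n).testBit k = false := by
      apply Nat.testBit_lt_two_pow
      have : 2^(n+1) ≤ 2^k := Nat.pow_le_pow_right (by norm_num) hk
      have := pow_succ 2 n
      omega
    rw [h1, h2]

lemma xor_pow_of_ge {n x : ℕ} (h1 : 2^n ≤ x) (h2 : x < 2^(n+1)) : x ^^^ 2^n = x - 2^n := by
  have hu : x - 2^n < 2^n := by have := pow_succ 2 n; omega
  have h3 := xor_pow_of_lt hu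
  have hx : x = (x - 2^n) ^^^ 2^n := by rw [h3]; omega
  calc x ^^^ 2^n = ((x - 2^n) ^^^ 2^n) ^^^ 2^n := by rw [← hx]
    _ = x - 2^n := xor_cancel_right _ _

lemma xor_pow_low {n k u : ℕ} (hu : u < 2^n) (hk : k < n) :
    (2^n + u) ^^^ 2^k = 2^n + (u ^^^ 2^k) := by
  have h1 : u ^^^ 2^k < 2^n := Nat.xor_lt_two_pow hu (Nat.pow_lt_pow_right (by norm_num) hk)
  have h2 : 2^n + (u ^^^ 2^k) = (u ^^^ 2^k) ^^^ 2^n := by rw [xor_pow_of_lt h1]; omega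
  rw [h2, Nat.xor_assoc, Nat.xor_comm (2^k), ← Nat.xor_assoc, xor_pow_of_lt hu]
  rw [Nat.add_comm]

open Equiv

lemma two_coloring {X : Type} [Fintype X] [DecidableEq X] (i j : Equiv.Perm X)
    (hi2 : ∀ x, i (i x) = x) (hj2 : ∀ x, j (j x) = x)
    (hi : ∀ x, i x ≠ x) (hj : ∀ x, j x ≠ x) :
    ∃ c : X → Bool, (∀ x, c (i x) = !c x) ∧ (∀ x, c (j x) = !c x) := by
  classical
  letI : LinearOrder X := LinearOrder.lift' (Fintype.equivFin X) (Equiv.injective _)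
  set q : Equiv.Perm X := i.trans j with hq
  have hqdef : ∀ x, q x = j (i x) := fun x => rfl
  have ident_i : ∀ y, q (i (q y)) = i y := by
    intro y; rw [hqdef, hqdef, hi2, hj2]
  have ident_j : ∀ y, q (j (q y)) = j y := by
    intro y; rw [hqdef, hqdef, hj2, hi2]
  have iter_i : ∀ (m : ℕ) (y : X), (q^m) (i ((q^m) y)) = i y := by
    intro m
    induction m with
    | zero => simp
    | succ m ih =>
      intro y
      have h1 : (q^(m+1)) y = (q^m) (q y) := by rw [pow_succ]; rfl
      have h2 : ∀ z, (q^(m+1)) z = q ((q^m) z) := by intro z; rw [pow_succ']; rfl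
      rw [h1, h2, ih (q y), ident_i]
  have iter_j : ∀ (m : ℕ) (y : X), (q^m) (j ((q^m) y)) = j y := by
    intro m
    induction m with
    | zero => simp
    | succ m ih =>
      intro y
      have h1 : (q^(m+1)) y = (q^m) (q y) := by rw [pow_succ]; rfl
      have h2 : ∀ z, (q^(m+1)) z = q ((q^m) z) := by intro z; rw [pow_succ']; rfl
      rw [h1, h2, ih (q y), ident_j]
  have claimA : ∀ (x : X) (k : ℕ), (q^k) x ≠ i x := by
    intro x k hk
    rcases Nat.even_or_odd k with ⟨m, hm⟩ | ⟨m, hm⟩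
    · have h2 : (q^m) (i ((q^m) x)) = (q^m) ((q^m) x) := by
        rw [iter_i m x, ← hk, hm, pow_add]; rfl
      exact hi _ ((q^m).injective h2)
    · have hx : (q^(k+1)) x = j x := by
        have : (q^(k+1)) x = q ((q^k) x) := by rw [pow_succ']; rfl
        rw [this, hk, hqdef, hi2]
      have hk1 : k + 1 = (m+1) + (m+1) := by omega
      have h2 : (q^(m+1)) (j ((q^(m+1)) x)) = (q^(m+1)) ((q^(m+1)) x) := by
        rw [iter_j (m+1) x, ← hx, hk1, pow_add]; rfl
      exact hj _ ((q^(m+1)).injective h2)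
  have claimA' : ∀ x : X, ¬ q.SameCycle x (i x) := by
    intro x ⟨b, hb⟩
    rcases le_or_gt 0 b with h | h
    · have hbn : b = (b.toNat : ℤ) := by omega
      rw [hbn, zpow_natCast] at hb
      exact claimA x b.toNat hb
    · have hx : ((q ^ (-b).toNat) : Equiv.Perm X) (i x) = i (i x) := by
        rw [hi2]
        have : ((q ^ (-b).toNat) : Equiv.Perm X) (i x) = (q ^ ((-b).toNat : ℤ)) (i x) := by
          rw [← zpow_natCast]
        rw [this, ← hb]
        have : ((-b).toNat : ℤ) = -b := by omega
        rw [this]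
        have : ((q ^ (-b)) * (q ^ b)) x = ((q ^ (-b + b)) : Equiv.Perm X) x := by
          rw [← zpow_add]
        simp only [Equiv.Perm.mul_apply] at this
        rw [this]
        simp
      exact claimA (i x) (-b).toNat hx
  -- orbit minimum construction
  let O : X → Finset X := fun x => Finset.univ.filter (fun z => q.SameCycle x z)
  have hmem : ∀ x, x ∈ O x := by
    intro x; simp only [O, Finset.mem_filter, Finset.mem_univ, true_and]
    exact Equiv.Perm.SameCycle.refl q x
  have hOne : ∀ x, (O x).Nonempty := fun x => ⟨x, hmem x⟩
  let m : X → X := fun x => (O x).min' (hOne x)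
  have hOcong : ∀ x y, q.SameCycle x y → O x = O y := by
    intro x y h
    ext z
    simp only [O, Finset.mem_filter, Finset.mem_univ, true_and]
    exact ⟨fun hz => h.symm.trans hz, fun hz => h.trans hz⟩
  have hmcong : ∀ x y, q.SameCycle x y → m x = m y := by
    intro x y h; simp only [m, hOcong x y h]
  have hm_sc : ∀ x, q.SameCycle x (m x) := by
    intro x
    have := (O x).min'_mem (hOne x)
    simpa only [O, Finset.mem_filter, Finset.mem_univ, true_and] using this
  have hne : ∀ x, m x ≠ m (i x) := by
    intro x h
    have h1 := hm_sc x
    have h2 := hm_sc (i x)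
    rw [h] at h1
    exact claimA' x (h1.trans h2.symm)
  refine ⟨fun x => decide (m x < m (i x)), ?_, ?_⟩
  · intro x
    simp only [hi2]
    rcases lt_or_gt_of_ne (hne x) with h | h
    · simp [h, le_of_lt h, not_lt_of_gt h]
    · simp [h, le_of_lt h, not_lt_of_gt h]
  · intro x
    have hjq : j x = q (i x) := by rw [hqdef, hi2]
    have h1 : ∀ y : X, m (q y) = m y := by
      intro y
      exact (hmcong y (q y) ⟨1, by simp⟩).symm
    have h2 : ∀ y : X, m (i (q y)) = m (i y) := by
      intro y
      exact hmcong _ _ ⟨1, by simpa using ident_i y⟩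
    show decide (m (j x) < m (i (j x))) = !decide (m x < m (i x))
    rw [hjq, h1 (i x), h2 (i x), hi2]
    rcases lt_or_gt_of_ne (hne x) with h | h
    · simp [h, le_of_lt h, not_lt_of_gt h]
    · simp [h, le_of_lt h, not_lt_of_gt h]

/-- A parallel layer of 2-mode gates along the `Bool` coordinate. -/
def layerP {X : Type} (s : X → Bool) : Equiv.Perm (Bool × X) where
  toFun z := (xor (s z.2) z.1, z.2)
  invFun z := (xor (s z.2) z.1, z.2)
  left_inv z := by rcases z with ⟨b, y⟩; cases hs : s y <;> cases b <;> simp [hs]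
  right_inv z := by rcases z with ⟨b, y⟩; cases hs : s y <;> cases b <;> simp [hs]

lemma layerP_apply {X : Type} (s : X → Bool) (z : Bool × X) :
    layerP s z = (xor (s z.2) z.1, z.2) := rfl

lemma layerP_layerP {X : Type} (s : X → Bool) (z : Bool × X) :
    layerP s (layerP s z) = z := by
  rcases z with ⟨b, y⟩; cases hs : s y <;> cases b <;> simp [layerP_apply, hs]

/-- A pair of permutations acting on the two halves. -/
def midP {X : Type} (f : Bool → Equiv.Perm X) : Equiv.Perm (Bool × X) where
  toFun z := (z.1, f z.1 z.2)
  invFun z := (z.1, (f z.1).symm z.2)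
  left_inv z := by simp
  right_inv z := by simp

lemma midP_apply {X : Type} (f : Bool → Equiv.Perm X) (z : Bool × X) :
    midP f z = (z.1, f z.1 z.2) := rfl

lemma midP_mul {X : Type} (f g : Bool → Equiv.Perm X) :
    midP f * midP g = midP (fun b => f b * g b) := by
  ext z
  · rfl
  · rfl

lemma midP_one {X : Type} : midP (fun _ => (1 : Equiv.Perm X)) = 1 := by
  ext z <;> rfl

lemma exists_midP {X : Type} (m : Equiv.Perm (Bool × X)) (h : ∀ z, (m z).1 = z.1) :
    ∃ f : Bool → Equiv.Perm X, m = midP f := by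
  refine ⟨fun b => ⟨fun y => (m (b, y)).2, fun y => (m.symm (b, y)).2, ?_, ?_⟩, ?_⟩
  · intro y
    have h1 : (b, (m (b, y)).2) = m (b, y) := by
      rw [Prod.ext_iff]
      exact ⟨(h (b, y)).symm, rfl⟩
    show (m.symm (b, (m (b, y)).2)).2 = y
    rw [h1, Equiv.symm_apply_apply]
  · intro y
    have h1 : (b, (m.symm (b, y)).2) = m.symm (b, y) := by
      have h2 := h (m.symm (b, y))
      rw [Equiv.apply_symm_apply] at h2
      rw [Prod.ext_iff]
      exact ⟨by rw [h2], rfl⟩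
    show (m (b, (m.symm (b, y)).2)).2 = y
    rw [h1, Equiv.apply_symm_apply]
  · ext ⟨b, y⟩
    · exact h (b, y)
    · rfl

lemma split_perm {X : Type} [Fintype X] [DecidableEq X] (σ : Equiv.Perm (Bool × X)) :
    ∃ (s t : X → Bool) (f : Bool → Equiv.Perm X),
      σ = layerP t * midP f * layerP s := by
  classical
  set i : Equiv.Perm (Bool × X) := layerP (fun _ => true) with hidef
  have hi_apply : ∀ z : Bool × X, i z = (!z.1, z.2) := by
    intro z; rcases z with ⟨b, y⟩; cases b <;> rfl
  have hi2 : ∀ z, i (i z) = z := by intro z; rw [hi_apply, hi_apply]; simp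
  have hifp : ∀ z, i z ≠ z := by
    intro z h; rw [hi_apply] at h
    have := congrArg Prod.fst h
    simp at this
  set j : Equiv.Perm (Bool × X) := (σ.trans i).trans σ.symm with hjdef
  have hj_apply : ∀ z, j z = σ.symm (i (σ z)) := fun z => rfl
  have hj2 : ∀ z, j (j z) = z := by
    intro z; rw [hj_apply, hj_apply, Equiv.apply_symm_apply, hi2, Equiv.symm_apply_apply]
  have hjfp : ∀ z, j z ≠ z := by
    intro z h
    rw [hj_apply] at h
    have h2 : i (σ z) = σ z := by
      have := congrArg σ h
      rwa [Equiv.apply_symm_apply] at this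
    exact hifp _ h2
  obtain ⟨c, hci, hcj⟩ := two_coloring i j hi2 hj2 hifp hjfp
  -- generic facts about routing layers built from a coloring
  have key : ∀ d : Bool × X → Bool, (∀ z, d (i z) = !d z) →
      (∀ z, (layerP (fun y => d (false, y)) z).1 = d z) ∧
      (∀ z, d (layerP (fun y => d (false, y)) z) = z.1) := by
    intro d hd
    have hdt : ∀ y, d (true, y) = !d (false, y) := by
      intro y
      have := hd (false, y)
      rw [hi_apply] at this
      exact this
    constructor
    · rintro ⟨b, y⟩
      cases b <;> cases hdy : d (false, y) <;>
        simp [layerP_apply, hdy, hdt]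
    · rintro ⟨b, y⟩
      cases b <;> cases hdy : d (false, y) <;>
        simp [layerP_apply, hdy, hdt]
  set c' : Bool × X → Bool := fun z => c (σ.symm z) with hc'def
  have hc'i : ∀ z, c' (i z) = !c' z := by
    intro z
    have h1 : σ.symm (i z) = j (σ.symm z) := by
      rw [hj_apply, Equiv.apply_symm_apply]
    show c (σ.symm (i z)) = !c (σ.symm z)
    rw [h1, hcj]
  obtain ⟨hs1, hs2⟩ := key c hci
  obtain ⟨ht1, ht2⟩ := key c' hc'i
  set s : X → Bool := fun y => c (false, y) with hsdef
  set t : X → Bool := fun y => c' (false, y) with htdef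
  set M : Equiv.Perm (Bool × X) := ((layerP s).trans σ).trans (layerP t) with hMdef
  have hM_apply : ∀ z, M z = layerP t (σ (layerP s z)) := fun z => rfl
  have hM1 : ∀ z, (M z).1 = z.1 := by
    intro z
    rw [hM_apply]
    have h1 : (layerP t (σ (layerP s z))).1 = c' (σ (layerP s z)) := ht1 _
    rw [h1]
    show c (σ.symm (σ (layerP s z))) = z.1
    rw [Equiv.symm_apply_apply]
    exact hs2 z
  obtain ⟨f, hf⟩ := exists_midP M hM1
  refine ⟨s, t, f, ?_⟩
  apply Equiv.ext
  intro z
  rw [Equiv.Perm.mul_apply, Equiv.Perm.mul_apply, ← hf]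
  show σ z = layerP t (layerP t (σ (layerP s (layerP s z))))
  rw [layerP_layerP, layerP_layerP]

/-- Split off the high bit. -/
def EHi (n : ℕ) : Fin (2^(n+1)) ≃ Bool × Fin (2^n) where
  toFun x := (decide (2^n ≤ x.val), ⟨x.val % 2^n, Nat.mod_lt _ (Nat.pow_pos (n := n) (by norm_num))⟩)
  invFun z := ⟨(cond z.1 (2^n) 0) + z.2.val, by
    have := z.2.isLt
    have h2 : 2^(n+1) = 2^n + 2^n := by rw [pow_succ]; omega
    cases z.1 <;> simp <;> omega⟩
  left_inv x := by
    have hx := x.isLt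
    have h2 : 2^(n+1) = 2^n + 2^n := by rw [pow_succ]; omega
    apply Fin.ext
    show (cond (decide (2^n ≤ x.val)) (2^n) 0) + x.val % 2^n = x.val
    by_cases h : 2^n ≤ x.val
    · rw [decide_eq_true h]
      have hmod : x.val % 2^n = x.val - 2^n := by
        rw [Nat.mod_eq_sub_mod h, Nat.mod_eq_of_lt (by omega)]
      show 2^n + x.val % 2^n = x.val
      omega
    · rw [decide_eq_false h]
      have hmod : x.val % 2^n = x.val := Nat.mod_eq_of_lt (by omega)
      show 0 + x.val % 2^n = x.val
      omega
  right_inv z := by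
    rcases z with ⟨b, y⟩
    have hy := y.isLt
    cases b
    · have h1 : ¬ (2^n ≤ 0 + y.val) := by omega
      refine Prod.ext ?_ ?_
      · show decide (2^n ≤ (0 : ℕ) + y.val) = false
        exact decide_eq_false h1
      · apply Fin.ext
        show (0 + y.val) % 2^n = y.val
        rw [Nat.zero_add, Nat.mod_eq_of_lt hy]
    · have h1 : 2^n ≤ 2^n + y.val := by omega
      refine Prod.ext ?_ ?_
      · show decide (2^n ≤ 2^n + y.val) = true
        exact decide_eq_true h1
      · apply Fin.ext
        show (2^n + y.val) % 2^n = y.val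
        rw [Nat.add_mod_left, Nat.mod_eq_of_lt hy]

lemma EHi_symm_val (n : ℕ) (p : Bool × Fin (2^n)) :
    (((EHi n).symm p) : ℕ) = (cond p.1 (2^n) 0) + p.2.val := rfl

lemma EHi_fst (n : ℕ) (x : Fin (2^(n+1))) : ((EHi n) x).1 = decide (2^n ≤ x.val) := rfl

lemma EHi_snd_val (n : ℕ) (x : Fin (2^(n+1))) : (((EHi n) x).2 : ℕ) = x.val % 2^n := rfl

/-- Transporting a layer along the high bit. -/
lemma layer_transport {n : ℕ} (u : Fin (2^n) → Bool) (x : Fin (2^(n+1))) :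
    ((((EHi n).symm.permCongr (layerP u)) x : Fin (2^(n+1))) : ℕ) = x.val ∨
    ((((EHi n).symm.permCongr (layerP u)) x : Fin (2^(n+1))) : ℕ) = x.val ^^^ 2^n := by
  have hx := x.isLt
  have h2 : 2^(n+1) = 2^n + 2^n := by rw [pow_succ]; omega
  rw [Equiv.permCongr_apply, Equiv.symm_symm]
  cases hu : u (((EHi n) x).2)
  · left
    have hl : layerP u ((EHi n) x) = (EHi n) x := by
      rw [layerP_apply, hu]
      simp
    rw [hl, Equiv.symm_apply_apply]
  · right
    have hl : layerP u ((EHi n) x) = (!((EHi n) x).1, ((EHi n) x).2) := by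
      rw [layerP_apply, hu]
      simp
    rw [hl, EHi_symm_val]
    show (cond (!((EHi n) x).1) (2^n) 0) + (((EHi n) x).2 : ℕ) = x.val ^^^ 2^n
    rw [EHi_fst, EHi_snd_val]
    by_cases h : 2^n ≤ x.val
    · rw [decide_eq_true h]
      show 0 + x.val % 2^n = x.val ^^^ 2^n
      rw [xor_pow_of_ge h hx, Nat.mod_eq_sub_mod h, Nat.mod_eq_of_lt (by omega)]
      omega
    · rw [decide_eq_false h]
      show 2^n + x.val % 2^n = x.val ^^^ 2^n
      rw [xor_pow_of_lt (by omega), Nat.mod_eq_of_lt (by omega)]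
      omega

/-- Transporting a mid permutation. -/
lemma mid_transport {n k : ℕ} (hk : k < n) (g : Bool → Equiv.Perm (Fin (2^n)))
    (hg : ∀ b y, ((g b y : Fin (2^n)) : ℕ) = (y : ℕ) ∨ ((g b y : Fin (2^n)) : ℕ) = (y : ℕ) ^^^ 2^k)
    (x : Fin (2^(n+1))) :
    ((((EHi n).symm.permCongr (midP g)) x : Fin (2^(n+1))) : ℕ) = x.val ∨
    ((((EHi n).symm.permCongr (midP g)) x : Fin (2^(n+1))) : ℕ) = x.val ^^^ 2^k := by
  rw [Equiv.permCongr_apply, Equiv.symm_symm]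
  have hxval : (x : ℕ) = (cond ((EHi n) x).1 (2^n) 0) + (((EHi n) x).2 : ℕ) := by
    conv_lhs => rw [← Equiv.symm_apply_apply (EHi n) x]
    rfl
  have hmid : midP g ((EHi n) x) = (((EHi n) x).1, g ((EHi n) x).1 (((EHi n) x).2)) := rfl
  rcases hg ((EHi n) x).1 (((EHi n) x).2) with h | h
  · left
    have hgy : g ((EHi n) x).1 (((EHi n) x).2) = ((EHi n) x).2 := Fin.ext h
    rw [hmid, hgy]
    have : ((((EHi n) x).1, ((EHi n) x).2) : Bool × Fin (2^n)) = (EHi n) x := rfl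
    rw [this, Equiv.symm_apply_apply]
  · right
    rw [hmid, EHi_symm_val]
    show (cond ((EHi n) x).1 (2^n) 0) + ((g ((EHi n) x).1 (((EHi n) x).2) : Fin (2^n)) : ℕ)
        = x.val ^^^ 2^k
    rw [h]
    cases hb : ((EHi n) x).1
    · have hxval2 : (x:ℕ) = 0 + ((((EHi n) x).2 : Fin (2^n)) : ℕ) := by rw [hxval, hb]; rfl
      show 0 + (((((EHi n) x).2 : Fin (2^n)) : ℕ) ^^^ 2^k) = (x:ℕ) ^^^ 2^k
      rw [hxval2, Nat.zero_add, Nat.zero_add]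
    · have hxval2 : (x:ℕ) = 2^n + ((((EHi n) x).2 : Fin (2^n)) : ℕ) := by rw [hxval, hb]; rfl
      show 2^n + (((((EHi n) x).2 : Fin (2^n)) : ℕ) ^^^ 2^k) = (x:ℕ) ^^^ 2^k
      rw [hxval2, xor_pow_low (((EHi n) x).2).isLt hk]

lemma permCongr_mul {α β : Type} (e : α ≃ β) (p q : Equiv.Perm α) :
    e.permCongr (p * q) = e.permCongr p * e.permCongr q := by
  apply Equiv.ext
  intro x
  simp [Equiv.permCongr_apply, Equiv.Perm.mul_apply]

lemma permCongr_one {α β : Type} (e : α ≃ β) : e.permCongr (1 : Equiv.Perm α) = 1 := by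
  apply Equiv.ext
  intro x
  simp [Equiv.permCongr_apply]

lemma permCongr_prod {α β : Type} (e : α ≃ β) (l : List (Equiv.Perm α)) :
    e.permCongr l.prod = (l.map (fun p => e.permCongr p)).prod := by
  induction l with
  | nil => simpa using permCongr_one e
  | cons a l ih => rw [List.prod_cons, _root_.permCongr_mul, ih, List.map_cons, List.prod_cons]

lemma permCongr_cancel {α β : Type} (e : α ≃ β) (σ : Equiv.Perm α) :
    e.symm.permCongr (e.permCongr σ) = σ := by
  apply Equiv.ext
  intro x
  simp [Equiv.permCongr_apply]

lemma midP_prod {X : Type} (l : List ℕ) (F : ℕ → Bool → Equiv.Perm X) :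
    (l.map (fun k => midP (F k))).prod = midP (fun b => (l.map (fun k => F k b)).prod) := by
  induction l with
  | nil => exact midP_one.symm
  | cons a l ih =>
    rw [List.map_cons, List.prod_cons, ih, midP_mul]
    rfl

lemma benes_aux : ∀ (n : ℕ) (σ : Equiv.Perm (Fin (2^n))),
    ∃ τ : ℕ → Equiv.Perm (Fin (2^n)),
      σ = ((List.range (2*n)).reverse.map τ).prod ∧
      ∀ j, j < 2*n → ∀ x : Fin (2^n),
        ((τ j x : Fin (2^n)) : ℕ) = (x : ℕ) ∨
        ((τ j x : Fin (2^n)) : ℕ) = (x : ℕ) ^^^ 2^(if j < n then n-1-j else j-n) := by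
  intro n
  induction n with
  | zero =>
    intro σ
    refine ⟨fun _ => 1, ?_, ?_⟩
    · have hσ : σ = 1 := by
        apply Equiv.ext
        intro x
        have h1 := x.isLt
        have h2 := (σ x).isLt
        norm_num at h1 h2
        apply Fin.ext
        omega
      rw [hσ]
      rfl
    · intro j hj
      omega
  | succ n ih =>
    intro σ
    obtain ⟨s, t, f, hstf⟩ := split_perm ((EHi n).permCongr σ)
    obtain ⟨τf, hτf_prod, hτf_bit⟩ := ih (f false)
    obtain ⟨τt, hτt_prod, hτt_bit⟩ := ih (f true)
    set Φ : Equiv.Perm (Bool × Fin (2^n)) → Equiv.Perm (Fin (2^(n+1))) :=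
      fun p => (EHi n).symm.permCongr p with hΦ
    set G : ℕ → (Bool → Equiv.Perm (Fin (2^n))) := fun k b => cond b (τt k) (τf k) with hG
    set τ' : ℕ → Equiv.Perm (Fin (2^(n+1))) := fun k =>
      if k = 0 then Φ (layerP s) else if k ≤ 2*n then Φ (midP (G (k-1))) else Φ (layerP t)
      with hτ'
    have hτ'0 : τ' 0 = Φ (layerP s) := by simp [hτ']
    have hτ'last : τ' (2*n+1) = Φ (layerP t) := by
      have h1 : ¬(2*n+1 = 0) := by omega
      have h2 : ¬(2*n+1 ≤ 2*n) := by omega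
      simp [hτ', h1, h2]
    have hτ'mid : ∀ k, k < 2*n → τ' (k+1) = Φ (midP (G k)) := by
      intro k hk
      have h1 : ¬(k+1 = 0) := by omega
      have h2 : k+1 ≤ 2*n := by omega
      simp [hτ', h1, h2]
    refine ⟨τ', ?_, ?_⟩
    · -- product identity
      have e1 : List.range (2*(n+1)) = List.range (2*n+1) ++ [2*n+1] := by
        have h : 2*(n+1) = (2*n+1)+1 := by omega
        rw [h, List.range_succ]
      have e2 : List.range (2*n+1) = 0 :: (List.range (2*n)).map Nat.succ :=
        List.range_succ_eq_map (n := 2*n)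
      have hmapsucc : (((List.range (2*n)).map Nat.succ).reverse.map τ')
          = (List.range (2*n)).reverse.map (fun k => Φ (midP (G k))) := by
        rw [← List.map_reverse, List.map_map]
        apply List.map_congr_left
        intro k hkmem
        have hk : k < 2*n := by
          rw [List.mem_reverse, List.mem_range] at hkmem
          exact hkmem
        exact hτ'mid k hk
      have hmid2 : ((List.range (2*n)).reverse.map (fun k => Φ (midP (G k)))).prod
          = Φ (midP f) := by
        have h3 : (fun k => Φ (midP (G k)))
            = (fun p => (EHi n).symm.permCongr p) ∘ (fun k => midP (G k)) := rfl
        rw [h3, ← List.map_map, ← permCongr_prod, midP_prod]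
        show Φ _ = Φ _
        congr 1
        congr 1
        funext b
        cases b
        · exact hτf_prod.symm
        · exact hτt_prod.symm
      have hexp : ((List.range (2*(n+1))).reverse.map τ').prod
          = τ' (2*n+1) * ((((List.range (2*n)).map Nat.succ).reverse.map τ').prod * τ' 0) := by
        rw [e1, List.reverse_append, e2]
        simp [List.reverse_cons, mul_assoc]
      rw [hexp, hτ'last, hτ'0, hmapsucc, hmid2]
      calc σ = (EHi n).symm.permCongr ((EHi n).permCongr σ) := (permCongr_cancel _ _).symm
        _ = (EHi n).symm.permCongr (layerP t * (midP f * layerP s)) := by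
              rw [hstf, mul_assoc]
        _ = Φ (layerP t) * (Φ (midP f) * Φ (layerP s)) := by
              rw [hΦ]
              rw [_root_.permCongr_mul, _root_.permCongr_mul]
    · -- bit condition
      intro j hj x
      rcases Nat.eq_zero_or_pos j with rfl | hj0
      · rw [hτ'0]
        have hbit : (if 0 < n+1 then n+1-1-0 else 0-(n+1)) = n := by simp
        rw [hbit]
        exact layer_transport s x
      · by_cases hlast : j = 2*n+1
        · subst hlast
          rw [hτ'last]
          have hbit : (if 2*n+1 < n+1 then n+1-1-(2*n+1) else (2*n+1)-(n+1)) = n := by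
            rw [if_neg (by omega)]
            omega
          rw [hbit]
          exact layer_transport t x
        · obtain ⟨k, rfl⟩ : ∃ k, j = k + 1 := ⟨j - 1, by omega⟩
          have hk : k < 2*n := by omega
          rw [hτ'mid k hk]
          set kb := if k < n then n-1-k else k-n with hkb
          have hkbn : kb < n := by
            rw [hkb]
            by_cases h : k < n
            · rw [if_pos h]; omega
            · rw [if_neg h]; omega
          have hbit : (if k+1 < n+1 then n+1-1-(k+1) else (k+1)-(n+1)) = kb := by
            rw [hkb]
            split_ifs <;> omega
          rw [hbit]
          apply mid_transport hkbn
          intro b y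
          cases b
          · exact hτf_bit k hk y
          · exact hτt_bit k hk y


/-- **Routing permutations through the Kaleidoscope architecture `BB*`**
(Beneš-type routing).  Every permutation `σ` of `Fin (2^n)` (with `n ≥ 1`) factors as
`σ = τ_{2n} ∘ ⋯ ∘ τ_1`, where the `j`-th factor moves every index `x` within
`{x, x XOR 2^{b_j}}` and the bit sequence is
`(b_1, …, b_{2n}) = (n-1, n-2, …, 1, 0, 0, 1, …, n-2, n-1)`.  Each factor `τ_j` is a
parallel layer of two-mode permutation gates along bit `b_j`, so every `2^n × 2^n`
permutation is implementable in the architecture `BB*`. -/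
theorem benes_routing_BBstar (n : ℕ) (hn : 1 ≤ n) (σ : Equiv.Perm (Fin (2 ^ n))) :
    ∃ τ : Fin (2 * n) → Equiv.Perm (Fin (2 ^ n)),
      σ = ((List.finRange (2 * n)).reverse.map τ).prod ∧
      ∀ (j : Fin (2 * n)) (x : Fin (2 ^ n)),
        (τ j x : ℕ) = (x : ℕ) ∨
        (τ j x : ℕ) = (x : ℕ) ^^^
          2 ^ (if (j : ℕ) < n then n - 1 - (j : ℕ) else (j : ℕ) - n) := by
  obtain ⟨τ₀, hprod, hbit⟩ := benes_aux n σ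
  refine ⟨fun j => τ₀ j.val, ?_, ?_⟩
  · rw [hprod]
    have hmaps : List.map (fun j : Fin (2*n) => τ₀ j.val) (List.finRange (2*n))
        = List.map τ₀ (List.range (2*n)) := by
      rw [← List.map_coe_finRange_eq_range, List.map_map]
      rfl
    rw [List.map_reverse, List.map_reverse, hmaps]
  · intro j x
    exact hbit j.val j.isLt x
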